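/- arXiv:1406.0693 — 4 statements merged into one kernel-verified Lean document; each statement's English description precedes it below -/
import Mathlib

section
/- Let c > 0 and T > 0. Let y : ℝ → ℝ be differentiable and nonnegative on [0, ∞), let f : ℝ → ℝ be continuous and nonnegative on [0, ∞), and suppose that y'(t) + c·y(t) ≤ f(t) for all t ≥ 0. Let A ≥ 0 be such that ∫_{kT}^{(k+1)T} f(t) dt ≤ A for every k ∈ ℕ. Then for every k ∈ ℕ one has y(kT) ≤ A/(1 - e^{-cT}) + e^{-ckT}·y(0). -/
open Real MeasureTheory intervalIntegral Set

/-- Differential-inequality core of Lemma 3.1, estimate (3.1). -/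
theorem decay_at_periods
    (c T : ℝ) (hc : 0 < c) (hT : 0 < T)
    (y f : ℝ → ℝ)
    (hy : DifferentiableOn ℝ y (Set.Ici 0))
    (hy0 : ∀ t : ℝ, 0 ≤ t → 0 ≤ y t)
    (hf : ContinuousOn f (Set.Ici 0))
    (hf0 : ∀ t : ℝ, 0 ≤ t → 0 ≤ f t)
    (hineq : ∀ t : ℝ, 0 ≤ t → derivWithin y (Set.Ici 0) t + c * y t ≤ f t)
    (A : ℝ) (hA : 0 ≤ A)
    (hint : ∀ k : ℕ, (∫ t in (k * T)..((k + 1 : ℕ) * T), f t) ≤ A) :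
    ∀ k : ℕ, y (k * T) ≤ A / (1 - Real.exp (-c * T)) + Real.exp (-c * (k * T)) * y 0 := by
  have hq1 : Real.exp (-c * T) < 1 := by
    rw [Real.exp_lt_one_iff]; nlinarith
  have hq0 : 0 < Real.exp (-c * T) := Real.exp_pos _
  set q := Real.exp (-c * T) with hqdef
  have h1q : 0 < 1 - q := by linarith
  -- the key one-step estimate on an interval [a,b] ⊆ [0,∞)
  have step : ∀ a b : ℝ, 0 ≤ a → a ≤ b →
      Real.exp (c * b) * y b ≤ Real.exp (c * a) * y a
        + ∫ t in a..b, Real.exp (c * t) * f t := by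
    intro a b ha hab
    set g : ℝ → ℝ := fun t => Real.exp (c * t) * f (max t 0) with hgdef
    have hgc : Continuous g := by
      exact (Real.continuous_exp.comp (continuous_const.mul continuous_id)).mul
        (hf.comp_continuous (continuous_id.max continuous_const)
          (fun t => le_max_right t 0))
    set F : ℝ → ℝ := fun t => Real.exp (c * t) * y t - ∫ s in a..t, g s with hFdef
    have hFanti : AntitoneOn F (Icc a b) := by
      apply antitoneOn_of_deriv_nonpos (convex_Icc a b)
      · apply ContinuousOn.sub
        · exact ((Real.continuous_exp.comp (continuous_const.mul continuous_id)).continuousOn).mul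
            (hy.continuousOn.mono (fun t ht => le_trans ha ht.1))
        · exact (intervalIntegral.continuous_primitive
            (fun a b => hgc.intervalIntegrable a b) a).continuousOn
      · intro t ht
        rw [interior_Icc] at ht
        have ht0 : 0 < t := lt_of_le_of_lt ha ht.1
        have hmem : Ici (0:ℝ) ∈ nhds t := Ici_mem_nhds ht0
        have hyd : DifferentiableAt ℝ y t := hy.differentiableAt hmem
        have h1 : HasDerivAt (fun u => Real.exp (c * u) * y u)
            (Real.exp (c * t) * c * y t + Real.exp (c * t) * deriv y t) t := by
          have he : HasDerivAt (fun u => Real.exp (c * u)) (Real.exp (c * t) * c) t := by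
            simpa using ((hasDerivAt_id t).const_mul c).exp
          exact he.mul hyd.hasDerivAt
        have h2 : HasDerivAt (fun u => ∫ s in a..u, g s) (g t) t :=
          intervalIntegral.integral_hasDerivAt_right (hgc.intervalIntegrable a t)
            (hgc.stronglyMeasurable.stronglyMeasurableAtFilter) hgc.continuousAt
        exact ((h1.sub h2).differentiableAt).differentiableWithinAt
      · intro t ht
        rw [interior_Icc] at ht
        have ht0 : 0 < t := lt_of_le_of_lt ha ht.1
        have hmem : Ici (0:ℝ) ∈ nhds t := Ici_mem_nhds ht0
        have hyd : DifferentiableAt ℝ y t := hy.differentiableAt hmem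
        have h1 : HasDerivAt (fun u => Real.exp (c * u) * y u)
            (Real.exp (c * t) * c * y t + Real.exp (c * t) * deriv y t) t := by
          have he : HasDerivAt (fun u => Real.exp (c * u)) (Real.exp (c * t) * c) t := by
            simpa using ((hasDerivAt_id t).const_mul c).exp
          exact he.mul hyd.hasDerivAt
        have h2 : HasDerivAt (fun u => ∫ s in a..u, g s) (g t) t :=
          intervalIntegral.integral_hasDerivAt_right (hgc.intervalIntegrable a t)
            (hgc.stronglyMeasurable.stronglyMeasurableAtFilter) hgc.continuousAt
        have hF' : HasDerivAt F
            (Real.exp (c * t) * c * y t + Real.exp (c * t) * deriv y t - g t) t := h1.sub h2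
        rw [hF'.deriv]
        have hgt : g t = Real.exp (c * t) * f t := by
          simp [hgdef, max_eq_left ht0.le]
        have hdw : derivWithin y (Ici 0) t = deriv y t := derivWithin_of_mem_nhds hmem
        have hin := hineq t ht0.le
        rw [hdw] at hin
        have hexp : 0 < Real.exp (c * t) := Real.exp_pos _
        rw [hgt]
        nlinarith [hin, hexp]
    have hFba : F b ≤ F a := hFanti ⟨le_refl a, hab⟩ ⟨hab, le_refl b⟩ hab
    have hFa : F a = Real.exp (c * a) * y a := by simp [hFdef]
    have hgeq : (∫ s in a..b, g s) = ∫ t in a..b, Real.exp (c * t) * f t := by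
      apply intervalIntegral.integral_congr
      intro s hs
      rw [uIcc_of_le hab] at hs
      simp [hgdef, max_eq_left (le_trans ha hs.1)]
    simp only [hFdef] at hFba
    rw [hgeq] at hFba
    simp only [intervalIntegral.integral_same, sub_zero] at hFba
    linarith
  -- one-period recursion
  have key : ∀ k : ℕ, y (((k + 1 : ℕ) : ℝ) * T) ≤ q * y (k * T) + A := by
    intro k
    have ha : (0:ℝ) ≤ k * T := by positivity
    have hab : (k:ℝ) * T ≤ ((k + 1 : ℕ) : ℝ) * T := by
      push_cast; nlinarith
    have hstep := step ((k:ℝ) * T) (((k + 1 : ℕ) : ℝ) * T) ha hab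
    -- bound the weighted integral
    have hintle : (∫ t in ((k:ℝ) * T)..(((k + 1 : ℕ) : ℝ) * T), Real.exp (c * t) * f t)
        ≤ Real.exp (c * (((k + 1 : ℕ) : ℝ) * T)) * A := by
      have hfint : IntervalIntegrable f volume ((k:ℝ) * T) (((k + 1 : ℕ) : ℝ) * T) := by
        apply ContinuousOn.intervalIntegrable
        apply hf.mono
        rw [uIcc_of_le hab]
        exact fun t ht => le_trans ha ht.1
      have hmono : (∫ t in ((k:ℝ) * T)..(((k + 1 : ℕ) : ℝ) * T), Real.exp (c * t) * f t)
          ≤ ∫ t in ((k:ℝ) * T)..(((k + 1 : ℕ) : ℝ) * T),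
              Real.exp (c * (((k + 1 : ℕ) : ℝ) * T)) * f t := by
        apply intervalIntegral.integral_mono_on hab
        · apply ContinuousOn.intervalIntegrable
          apply ContinuousOn.mul
          · exact (Real.continuous_exp.comp (continuous_const.mul continuous_id)).continuousOn
          · apply hf.mono
            rw [uIcc_of_le hab]
            exact fun t ht => le_trans ha ht.1
        · exact hfint.const_mul _
        · intro t ht
          have hft : 0 ≤ f t := hf0 t (le_trans ha ht.1)
          have : Real.exp (c * t) ≤ Real.exp (c * (((k + 1 : ℕ) : ℝ) * T)) := by
            apply Real.exp_le_exp.mpr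
            nlinarith [ht.2]
          nlinarith
      rw [intervalIntegral.integral_const_mul] at hmono
      have := hint k
      have hexp : 0 < Real.exp (c * (((k + 1 : ℕ) : ℝ) * T)) := Real.exp_pos _
      nlinarith
    have hcomb : Real.exp (c * (((k + 1 : ℕ) : ℝ) * T)) * y (((k + 1 : ℕ) : ℝ) * T)
        ≤ Real.exp (c * ((k:ℝ) * T)) * y ((k:ℝ) * T)
          + Real.exp (c * (((k + 1 : ℕ) : ℝ) * T)) * A := le_trans hstep (by linarith)
    have hEb : 0 < Real.exp (c * (((k + 1 : ℕ) : ℝ) * T)) := Real.exp_pos _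
    have hEratio : Real.exp (c * ((k:ℝ) * T)) = q * Real.exp (c * (((k + 1 : ℕ) : ℝ) * T)) := by
      rw [hqdef, ← Real.exp_add]
      congr 1
      push_cast
      ring
    rw [hEratio] at hcomb
    have hy1 := hy0 ((k:ℝ) * T) ha
    nlinarith [hcomb, hEb]
  -- induction
  intro k
  induction k with
  | zero =>
    have : 0 ≤ A / (1 - q) := div_nonneg hA h1q.le
    simp only [Nat.cast_zero, zero_mul, mul_zero, neg_zero, Real.exp_zero, one_mul]
    linarith
  | succ k ih =>
    have hk := key k
    have hqy : q * y ((k:ℝ) * T) ≤ q * (A / (1 - q) + Real.exp (-c * ((k:ℝ) * T)) * y 0) :=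
      mul_le_mul_of_nonneg_left ih hq0.le
    have hB : q * (A / (1 - q)) + A = A / (1 - q) := by
      field_simp
      ring
    have hE : Real.exp (-c * (((k + 1 : ℕ) : ℝ) * T)) = q * Real.exp (-c * ((k:ℝ) * T)) := by
      rw [hqdef, ← Real.exp_add]
      congr 1
      push_cast
      ring
    calc y (((k + 1 : ℕ) : ℝ) * T) ≤ q * y ((k:ℝ) * T) + A := hk
      _ ≤ q * (A / (1 - q) + Real.exp (-c * ((k:ℝ) * T)) * y 0) + A := by linarith
      _ = A / (1 - q) + Real.exp (-c * (((k + 1 : ℕ) : ℝ) * T)) * y 0 := by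
          rw [hE]
          have h2 : q * (A / (1 - q) + Real.exp (-c * ((k:ℝ) * T)) * y 0) + A
              = (q * (A / (1 - q)) + A) + q * (Real.exp (-c * ((k:ℝ) * T)) * y 0) := by ring
          rw [h2, hB]; ring
end

section
/- Let c₁, c₂, T > 0. Let y, z, f : ℝ → ℝ be functions on [0, ∞) with y differentiable, z and f continuous, 0 ≤ y(t) ≤ z(t) and f(t) ≥ 0 for all t ≥ 0, and suppose that y'(t) + c₁·z(t) ≤ c₂·y(t)² + c₂·f(t) for all t ≥ 0. Let M, F ≥ 0 be such that ∫_{kT}^{(k+1)T} y(t) dt ≤ M and ∫_{kT}^{(k+1)T} f(t) dt ≤ F for every k ∈ ℕ, and assume c₂·M ≤ c₁·T/2. Define A₄ = c₂·e^{c₂M}·F and A₅ = A₄/(1 - e^{-c₁T/2}) + y(0). Then: (i) y(kT) ≤ A₅ for every k ∈ ℕ; (ii) y(t) ≤ A₄ + e^{c₂M}·A₅ for every t ≥ 0; (iii) for every k ∈ ℕ and t ∈ [kT, (k+1)T], y(t) + c₁·∫_{kT}^{t} z(s) ds ≤ c₂·(A₄ + e^{c₂M}·A₅)·M + c₂·F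 + A₅. -/
open Real MeasureTheory intervalIntegral Set

lemma prim_cont {a b : ℝ} {g : ℝ → ℝ} (hab : a ≤ b) (hg : ContinuousOn g (Icc a b)) :
    ContinuousOn (fun x => ∫ t in a..x, g t) (Icc a b) := by
  have h := continuousOn_primitive_interval (μ := volume) (f := g) (a := a) (b := b)
    (by rw [uIcc_of_le hab]; exact hg.integrableOn_Icc)
  rwa [uIcc_of_le hab] at h

lemma prim_deriv {a b : ℝ} {g : ℝ → ℝ} (hg : ContinuousOn g (Icc a b))
    {t : ℝ} (ht : t ∈ Ioo a b) :
    HasDerivAt (fun x => ∫ s in a..x, g s) (g t) t := by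
  have hmem : Icc a b ∈ nhds t := Icc_mem_nhds ht.1 ht.2
  refine integral_hasDerivAt_right ?_ ?_ (hg.continuousAt hmem)
  · refine (hg.mono ?_).intervalIntegrable
    rw [uIcc_of_le ht.1.le]; exact Icc_subset_Icc le_rfl ht.2.le
  · exact ⟨Icc a b, hmem, hg.aestronglyMeasurable measurableSet_Icc⟩

lemma integral_prefix_nonneg {a b t : ℝ} {g : ℝ → ℝ} (ht : t ∈ Icc a b)
    (hg0 : ∀ s ∈ Icc a b, 0 ≤ g s) : 0 ≤ ∫ s in a..t, g s :=
  intervalIntegral.integral_nonneg ht.1 (fun s hs => hg0 s ⟨hs.1, hs.2.trans ht.2⟩)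

lemma integral_prefix_le {a b t : ℝ} {g : ℝ → ℝ} {F : ℝ} (ht : t ∈ Icc a b)
    (hg : ContinuousOn g (Icc a b)) (hg0 : ∀ s ∈ Icc a b, 0 ≤ g s)
    (hF : (∫ s in a..b, g s) ≤ F) : (∫ s in a..t, g s) ≤ F := by
  have int1 : IntervalIntegrable g volume a t := by
    refine (hg.mono ?_).intervalIntegrable
    rw [uIcc_of_le ht.1]; exact Icc_subset_Icc le_rfl ht.2
  have int2 : IntervalIntegrable g volume t b := by
    refine (hg.mono ?_).intervalIntegrable
    rw [uIcc_of_le ht.2]; exact Icc_subset_Icc ht.1 le_rfl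
  have hadd := integral_add_adjacent_intervals int1 int2
  have h2 : 0 ≤ ∫ s in t..b, g s :=
    intervalIntegral.integral_nonneg ht.2 (fun s hs => hg0 s ⟨ht.1.trans hs.1, hs.2⟩)
  linarith

lemma gronwall_key (c₁ c₂ : ℝ) (hc₁ : 0 ≤ c₁) (hc₂ : 0 < c₂)
    (y f : ℝ → ℝ)
    (hy : DifferentiableOn ℝ y (Set.Ici 0))
    (hf : ContinuousOn f (Set.Ici 0))
    (hy0 : ∀ t : ℝ, 0 ≤ t → 0 ≤ y t)
    (hf0 : ∀ t : ℝ, 0 ≤ t → 0 ≤ f t)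
    (hineq : ∀ t : ℝ, 0 ≤ t →
      derivWithin y (Set.Ici 0) t ≤ c₂ * (y t) ^ 2 - c₁ * y t + c₂ * f t)
    (a b : ℝ) (ha : 0 ≤ a) (hab : a ≤ b)
    (M F : ℝ) (hF : 0 ≤ F)
    (hMy : (∫ s in a..b, y s) ≤ M)
    (hFf : (∫ s in a..b, f s) ≤ F) :
    ∀ t ∈ Icc a b, y t ≤ y a * Real.exp (c₂ * M - c₁ * (t - a))
      + c₂ * F * Real.exp (c₂ * M) := by
  have hS : Icc a b ⊆ Ici (0:ℝ) := fun s hs => ha.trans hs.1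
  have ycont : ContinuousOn y (Icc a b) := hy.continuousOn.mono hS
  have fcont : ContinuousOn f (Icc a b) := hf.mono hS
  set Y : ℝ → ℝ := fun t => ∫ s in a..t, y s with hY
  have YC : ContinuousOn Y (Icc a b) := prim_cont hab ycont
  set E : ℝ → ℝ := fun t => Real.exp (c₁ * (t - a) - c₂ * Y t) with hE
  have EC : ContinuousOn E (Icc a b) := by
    apply Real.continuous_exp.comp_continuousOn
    exact ((continuous_const.mul (continuous_id.sub continuous_const)).continuousOn).sub
      (continuousOn_const.mul YC)
  have Epos : ∀ s, 0 < E s := fun s => Real.exp_pos _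
  have Ed : ∀ t ∈ Ioo a b, HasDerivAt E ((c₁ - c₂ * y t) * E t) t := by
    intro t ht
    have h1 : HasDerivAt (fun s => c₁ * (s - a) - c₂ * Y s) (c₁ - c₂ * y t) t := by
      have := (((hasDerivAt_id t).sub_const a).const_mul c₁).sub
        ((prim_deriv ycont ht).const_mul c₂)
      simp only [mul_one, id_eq] at this; exact this
    have h2 := h1.exp
    rw [hE]; convert h2 using 1; ring
  have fEcont : ContinuousOn (fun s => f s * E s) (Icc a b) := fcont.mul EC
  set C : ℝ → ℝ := fun t => ∫ s in a..t, f s * E s with hC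
  have CC : ContinuousOn C (Icc a b) := prim_cont hab fEcont
  set G : ℝ → ℝ := fun t => y t * E t - c₂ * C t with hG
  have GC : ContinuousOn G (Icc a b) := (ycont.mul EC).sub (continuousOn_const.mul CC)
  have Ganti : AntitoneOn G (Icc a b) := by
    refine antitoneOn_of_hasDerivWithinAt_nonpos (convex_Icc a b) GC
      (f' := fun t => derivWithin y (Set.Ici 0) t * E t + y t * ((c₁ - c₂ * y t) * E t)
        - c₂ * (f t * E t)) ?_ ?_
    · intro t ht
      rw [interior_Icc] at ht
      have h0t : (0:ℝ) < t := lt_of_le_of_lt ha ht.1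
      have hyt : HasDerivAt y (derivWithin y (Set.Ici 0) t) t :=
        ((hy t (le_of_lt h0t)).hasDerivWithinAt).hasDerivAt (Ici_mem_nhds h0t)
      exact (((hyt.mul (Ed t ht)).sub ((prim_deriv fEcont ht).const_mul c₂))).hasDerivWithinAt
    · intro t ht
      rw [interior_Icc] at ht
      have h0t : (0:ℝ) ≤ t := ha.trans ht.1.le
      have h1 := hineq t h0t
      have hEt := Epos t
      show derivWithin y (Set.Ici 0) t * E t + y t * ((c₁ - c₂ * y t) * E t)
        - c₂ * (f t * E t) ≤ 0
      nlinarith [mul_le_mul_of_nonneg_right h1 hEt.le]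
  intro t ht
  have hGt : G t ≤ G a := Ganti (left_mem_Icc.2 hab) ht ht.1
  have hGa : G a = y a := by
    simp [hG, hC, hE, hY, intervalIntegral.integral_same]
  have h1 : y t * E t ≤ y a + c₂ * C t := by
    have h2 : y t * E t - c₂ * C t ≤ y a := by rw [← hGa]; exact hGt
    linarith
  -- bounds on Y
  have ynn : ∀ s ∈ Icc a b, 0 ≤ y s := fun s hs => hy0 s (hS hs)
  have fnn : ∀ s ∈ Icc a b, 0 ≤ f s := fun s hs => hf0 s (hS hs)
  have hYnn : ∀ s ∈ Icc a b, 0 ≤ Y s := fun s hs => integral_prefix_nonneg hs ynn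
  have hYle : Y t ≤ M := integral_prefix_le ht ycont ynn hMy
  -- bound on C t
  have hCt : C t ≤ F * Real.exp (c₁ * (t - a)) := by
    have intfE : IntervalIntegrable (fun s => f s * E s) volume a t := by
      refine (fEcont.mono ?_).intervalIntegrable
      rw [uIcc_of_le ht.1]; exact Icc_subset_Icc le_rfl ht.2
    have intf : IntervalIntegrable (fun s => f s * Real.exp (c₁ * (t - a))) volume a t := by
      refine ((fcont.mul continuousOn_const).mono ?_).intervalIntegrable
      rw [uIcc_of_le ht.1]; exact Icc_subset_Icc le_rfl ht.2
    have hmono : C t ≤ ∫ s in a..t, f s * Real.exp (c₁ * (t - a)) := by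
      refine intervalIntegral.integral_mono_on ht.1 intfE intf ?_
      intro s hs
      have hs' : s ∈ Icc a b := ⟨hs.1, hs.2.trans ht.2⟩
      have hEle : E s ≤ Real.exp (c₁ * (t - a)) := by
        rw [hE]; apply Real.exp_le_exp.2
        have h6 := hYnn s hs'
        nlinarith [mul_le_mul_of_nonneg_left hs.2 hc₁, mul_nonneg hc₂.le h6]
      exact mul_le_mul_of_nonneg_left hEle (fnn s hs')
    have heq : (∫ s in a..t, f s * Real.exp (c₁ * (t - a)))
        = (∫ s in a..t, f s) * Real.exp (c₁ * (t - a)) :=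
      intervalIntegral.integral_mul_const _ _
    have hfle : (∫ s in a..t, f s) ≤ F := integral_prefix_le ht fcont fnn hFf
    calc C t ≤ (∫ s in a..t, f s) * Real.exp (c₁ * (t - a)) := by rw [← heq]; exact hmono
      _ ≤ F * Real.exp (c₁ * (t - a)) :=
        mul_le_mul_of_nonneg_right hfle (Real.exp_pos _).le
  -- combine
  have h3 : (1:ℝ) ≤ Real.exp (c₂ * M - c₁ * (t - a)) * E t := by
    rw [hE, ← Real.exp_add]
    apply Real.one_le_exp; nlinarith [hYle]
  have h4 : Real.exp (c₁ * (t - a)) ≤ Real.exp (c₂ * M) * E t := by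
    rw [hE, ← Real.exp_add]
    apply Real.exp_le_exp.2; nlinarith [hYle]
  have hya : 0 ≤ y a := hy0 a ha
  have h5 : y t * E t ≤ (y a * Real.exp (c₂ * M - c₁ * (t - a))
      + c₂ * F * Real.exp (c₂ * M)) * E t := by
    have e1 : y a ≤ y a * (Real.exp (c₂ * M - c₁ * (t - a)) * E t) :=
      le_mul_of_one_le_right hya h3
    have e2 : c₂ * C t ≤ c₂ * F * (Real.exp (c₂ * M) * E t) := by
      have : c₂ * C t ≤ c₂ * (F * Real.exp (c₁ * (t - a))) :=
        mul_le_mul_of_nonneg_left hCt hc₂.le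
      nlinarith [mul_le_mul_of_nonneg_left h4 (mul_nonneg hc₂.le hF)]
    calc y t * E t ≤ y a + c₂ * C t := h1
      _ ≤ y a * (Real.exp (c₂ * M - c₁ * (t - a)) * E t)
          + c₂ * F * (Real.exp (c₂ * M) * E t) := add_le_add e1 e2
      _ = (y a * Real.exp (c₂ * M - c₁ * (t - a)) + c₂ * F * Real.exp (c₂ * M)) * E t := by ring
  exact le_of_mul_le_mul_right h5 (Epos t)
lemma integrated_ineq (c₁ c₂ : ℝ)
    (y z f : ℝ → ℝ)
    (hy : DifferentiableOn ℝ y (Set.Ici 0))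
    (hz : ContinuousOn z (Set.Ici 0))
    (hf : ContinuousOn f (Set.Ici 0))
    (hineq : ∀ t : ℝ, 0 ≤ t →
      derivWithin y (Set.Ici 0) t + c₁ * z t ≤ c₂ * (y t) ^ 2 + c₂ * f t)
    (a b : ℝ) (ha : 0 ≤ a) (hab : a ≤ b) :
    ∀ t ∈ Icc a b, y t + c₁ * (∫ s in a..t, z s)
      ≤ y a + c₂ * (∫ s in a..t, (y s) ^ 2) + c₂ * (∫ s in a..t, f s) := by
  have hS : Icc a b ⊆ Ici (0:ℝ) := fun s hs => ha.trans hs.1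
  have ycont : ContinuousOn y (Icc a b) := hy.continuousOn.mono hS
  have zcont : ContinuousOn z (Icc a b) := hz.mono hS
  have fcont : ContinuousOn f (Icc a b) := hf.mono hS
  have y2cont : ContinuousOn (fun s => (y s) ^ 2) (Icc a b) := ycont.pow 2
  set H : ℝ → ℝ := fun t => y t + c₁ * (∫ s in a..t, z s)
    - c₂ * (∫ s in a..t, (y s) ^ 2) - c₂ * (∫ s in a..t, f s) with hH
  have HC : ContinuousOn H (Icc a b) :=
    ((ycont.add (continuousOn_const.mul (prim_cont hab zcont))).sub
      (continuousOn_const.mul (prim_cont hab y2cont))).sub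
      (continuousOn_const.mul (prim_cont hab fcont))
  have Hanti : AntitoneOn H (Icc a b) := by
    refine antitoneOn_of_hasDerivWithinAt_nonpos (convex_Icc a b) HC
      (f' := fun t => derivWithin y (Set.Ici 0) t + c₁ * z t - c₂ * (y t) ^ 2 - c₂ * f t) ?_ ?_
    · intro t ht
      rw [interior_Icc] at ht
      have h0t : (0:ℝ) < t := lt_of_le_of_lt ha ht.1
      have hyt : HasDerivAt y (derivWithin y (Set.Ici 0) t) t :=
        ((hy t (le_of_lt h0t)).hasDerivWithinAt).hasDerivAt (Ici_mem_nhds h0t)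
      exact (((hyt.add ((prim_deriv zcont ht).const_mul c₁)).sub
        ((prim_deriv y2cont ht).const_mul c₂)).sub
        ((prim_deriv fcont ht).const_mul c₂)).hasDerivWithinAt
    · intro t ht
      rw [interior_Icc] at ht
      have h1 := hineq t (ha.trans ht.1.le)
      show derivWithin y (Set.Ici 0) t + c₁ * z t - c₂ * (y t) ^ 2 - c₂ * f t ≤ 0
      linarith
  intro t ht
  have hHt : H t ≤ H a := Hanti (left_mem_Icc.2 hab) ht ht.1
  have hHa : H a = y a := by simp [hH, intervalIntegral.integral_same]
  have h2 : y t + c₁ * (∫ s in a..t, z s) - c₂ * (∫ s in a..t, (y s) ^ 2)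
      - c₂ * (∫ s in a..t, f s) ≤ y a := by rw [← hHa]; exact hHt
  linarith

/-- Differential-inequality core of Lemma 3.2. -/
theorem lemma32_core
    (c₁ c₂ T : ℝ) (hc₁ : 0 < c₁) (hc₂ : 0 < c₂) (hT : 0 < T)
    (y z f : ℝ → ℝ)
    (hy : DifferentiableOn ℝ y (Set.Ici 0))
    (hz : ContinuousOn z (Set.Ici 0))
    (hf : ContinuousOn f (Set.Ici 0))
    (hyz : ∀ t : ℝ, 0 ≤ t → 0 ≤ y t ∧ y t ≤ z t)
    (hf0 : ∀ t : ℝ, 0 ≤ t → 0 ≤ f t)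
    (hineq : ∀ t : ℝ, 0 ≤ t →
      derivWithin y (Set.Ici 0) t + c₁ * z t ≤ c₂ * (y t) ^ 2 + c₂ * f t)
    (M F : ℝ) (hM : 0 ≤ M) (hF : 0 ≤ F)
    (hinty : ∀ k : ℕ, (∫ t in (k * T)..((k + 1 : ℕ) * T), y t) ≤ M)
    (hintf : ∀ k : ℕ, (∫ t in (k * T)..((k + 1 : ℕ) * T), f t) ≤ F)
    (hlarge : c₂ * M ≤ c₁ * T / 2)
    (A₄ A₅ : ℝ)
    (hA₄ : A₄ = c₂ * Real.exp (c₂ * M) * F)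
    (hA₅ : A₅ = A₄ / (1 - Real.exp (-c₁ * T / 2)) + y 0) :
    (∀ k : ℕ, y (k * T) ≤ A₅) ∧
    (∀ t : ℝ, 0 ≤ t → y t ≤ A₄ + Real.exp (c₂ * M) * A₅) ∧
    (∀ k : ℕ, ∀ t ∈ Set.Icc ((k : ℝ) * T) (((k : ℝ) + 1) * T),
      y t + c₁ * (∫ s in ((k : ℝ) * T)..t, z s)
        ≤ c₂ * (A₄ + Real.exp (c₂ * M) * A₅) * M + c₂ * F + A₅) := by
  have hy0' : ∀ t : ℝ, 0 ≤ t → 0 ≤ y t := fun t ht => (hyz t ht).1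
  have hineq' : ∀ t : ℝ, 0 ≤ t →
      derivWithin y (Set.Ici 0) t ≤ c₂ * (y t) ^ 2 - c₁ * y t + c₂ * f t := by
    intro t ht
    have h1 := hineq t ht
    have h2 : c₁ * y t ≤ c₁ * z t := mul_le_mul_of_nonneg_left (hyz t ht).2 hc₁.le
    linarith
  set q : ℝ := Real.exp (-c₁ * T / 2) with hq
  have hq1 : q < 1 := by
    rw [hq]; exact Real.exp_lt_one_iff.2 (by nlinarith)
  have hqpos : 0 < q := Real.exp_pos _
  have h1q : (0:ℝ) < 1 - q := by linarith
  have hA₄nn : 0 ≤ A₄ := by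
    rw [hA₄]; positivity
  have hy00 : 0 ≤ y 0 := hy0' 0 le_rfl
  have hA₅y0 : y 0 ≤ A₅ := by
    rw [hA₅]
    have : 0 ≤ A₄ / (1 - q) := div_nonneg hA₄nn h1q.le
    linarith
  have hA₅nn : 0 ≤ A₅ := hy00.trans hA₅y0
  have hc₂F : c₂ * F * Real.exp (c₂ * M) = A₄ := by rw [hA₄]; ring
  -- Part (i)
  have part1 : ∀ k : ℕ, y (k * T) ≤ A₅ := by
    intro k
    induction k with
    | zero => simpa using hA₅y0
    | succ k ih =>
      have ha : (0:ℝ) ≤ (k:ℝ) * T := by positivity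
      have hab : (k:ℝ) * T ≤ ((k:ℝ) + 1) * T := by nlinarith
      have hMy : (∫ s in ((k:ℝ) * T)..(((k:ℝ) + 1) * T), y s) ≤ M := by
        have h := hinty k; push_cast at h; exact h
      have hFf : (∫ s in ((k:ℝ) * T)..(((k:ℝ) + 1) * T), f s) ≤ F := by
        have h := hintf k; push_cast at h; exact h
      have gk := gronwall_key c₁ c₂ hc₁.le hc₂ y f hy hf hy0' hf0 hineq'
        ((k:ℝ) * T) (((k:ℝ) + 1) * T) ha hab M F hF hMy hFf
        (((k:ℝ) + 1) * T) (right_mem_Icc.2 hab)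
      have hba : ((k:ℝ) + 1) * T - (k:ℝ) * T = T := by ring
      rw [hba] at gk
      have hexp : Real.exp (c₂ * M - c₁ * T) ≤ q := by
        rw [hq]; exact Real.exp_le_exp.2 (by linarith)
      have h2 : y ((k:ℝ) * T) * Real.exp (c₂ * M - c₁ * T) ≤ A₅ * q :=
        mul_le_mul ih hexp (Real.exp_pos _).le hA₅nn
      have key : A₅ * q + A₄ ≤ A₅ := by
        have hdm : A₄ / (1 - q) * (1 - q) = A₄ := div_mul_cancel₀ _ h1q.ne'
        have hdm2 : A₄ / (1 - q) * q = A₄ / (1 - q) - A₄ := by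
          linear_combination -hdm
        have h3 : y 0 * q ≤ y 0 := mul_le_of_le_one_right hy00 hq1.le
        have hexpand : (A₄ / (1 - q) + y 0) * q = A₄ / (1 - q) * q + y 0 * q := by ring
        rw [hA₅]
        linarith [hdm2, h3, hexpand]
      have hcast : ((k + 1 : ℕ) : ℝ) * T = ((k:ℝ) + 1) * T := by push_cast; ring
      rw [hcast]
      linarith [gk]
  -- Part (ii)
  have part2 : ∀ t : ℝ, 0 ≤ t → y t ≤ A₄ + Real.exp (c₂ * M) * A₅ := by
    intro t ht
    set k : ℕ := ⌊t / T⌋₊ with hk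
    have ha : (0:ℝ) ≤ (k:ℝ) * T := by positivity
    have hkt : (k:ℝ) * T ≤ t :=
      (le_div_iff₀ hT).1 (Nat.floor_le (div_nonneg ht hT.le))
    have htk1 : t ≤ ((k:ℝ) + 1) * T :=
      le_of_lt ((div_lt_iff₀ hT).1 (by exact_mod_cast Nat.lt_floor_add_one (t / T)))
    have hab : (k:ℝ) * T ≤ ((k:ℝ) + 1) * T := hkt.trans htk1
    have hMy : (∫ s in ((k:ℝ) * T)..(((k:ℝ) + 1) * T), y s) ≤ M := by
      have h := hinty k; push_cast at h; exact h
    have hFf : (∫ s in ((k:ℝ) * T)..(((k:ℝ) + 1) * T), f s) ≤ F := by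
      have h := hintf k; push_cast at h; exact h
    have gk := gronwall_key c₁ c₂ hc₁.le hc₂ y f hy hf hy0' hf0 hineq'
      ((k:ℝ) * T) (((k:ℝ) + 1) * T) ha hab M F hF hMy hFf t ⟨hkt, htk1⟩
    have hexp : Real.exp (c₂ * M - c₁ * (t - (k:ℝ) * T)) ≤ Real.exp (c₂ * M) := by
      apply Real.exp_le_exp.2
      nlinarith
    have h2 : y ((k:ℝ) * T) * Real.exp (c₂ * M - c₁ * (t - (k:ℝ) * T))
        ≤ A₅ * Real.exp (c₂ * M) :=
      mul_le_mul (part1 k) hexp (Real.exp_pos _).le hA₅nn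
    nlinarith [gk]
  refine ⟨part1, part2, ?_⟩
  -- Part (iii)
  intro k t ht
  set a : ℝ := (k:ℝ) * T with hadef
  set b : ℝ := ((k:ℝ) + 1) * T with hbdef
  have ha : (0:ℝ) ≤ a := by rw [hadef]; positivity
  have hab : a ≤ b := ht.1.trans ht.2
  have hS : Icc a b ⊆ Ici (0:ℝ) := fun s hs => ha.trans hs.1
  have ycont : ContinuousOn y (Icc a b) := hy.continuousOn.mono hS
  have fcont : ContinuousOn f (Icc a b) := hf.mono hS
  set B : ℝ := A₄ + Real.exp (c₂ * M) * A₅ with hB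
  have hBnn : 0 ≤ B := hy00.trans (part2 0 le_rfl)
  have key := integrated_ineq c₁ c₂ y z f hy hz hf hineq a b ha hab t ht
  have hMy : (∫ s in a..b, y s) ≤ M := by
    have h := hinty k; push_cast at h; rw [hadef, hbdef]; exact h
  have hFf : (∫ s in a..b, f s) ≤ F := by
    have h := hintf k; push_cast at h; rw [hadef, hbdef]; exact h
  have hfle : (∫ s in a..t, f s) ≤ F :=
    integral_prefix_le ht fcont (fun s hs => hf0 s (hS hs)) hFf
  have hyle : (∫ s in a..t, y s) ≤ M :=
    integral_prefix_le ht ycont (fun s hs => hy0' s (hS hs)) hMy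
  have hynn : 0 ≤ ∫ s in a..t, y s :=
    integral_prefix_nonneg ht (fun s hs => hy0' s (hS hs))
  have hy2le : (∫ s in a..t, (y s) ^ 2) ≤ B * M := by
    have int1 : IntervalIntegrable (fun s => (y s) ^ 2) volume a t := by
      refine ((ycont.pow 2).mono ?_).intervalIntegrable
      rw [uIcc_of_le ht.1]; exact Icc_subset_Icc le_rfl ht.2
    have int2 : IntervalIntegrable (fun s => B * y s) volume a t := by
      refine ((continuousOn_const.mul ycont).mono ?_).intervalIntegrable
      rw [uIcc_of_le ht.1]; exact Icc_subset_Icc le_rfl ht.2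
    have hmono : (∫ s in a..t, (y s) ^ 2) ≤ ∫ s in a..t, B * y s := by
      refine intervalIntegral.integral_mono_on ht.1 int1 int2 ?_
      intro s hs
      have hs0 : (0:ℝ) ≤ s := ha.trans hs.1
      have h1 : 0 ≤ y s := hy0' s hs0
      have h2 : y s ≤ B := part2 s hs0
      nlinarith
    have heq : (∫ s in a..t, B * y s) = B * ∫ s in a..t, y s :=
      intervalIntegral.integral_const_mul _ _
    calc (∫ s in a..t, (y s) ^ 2) ≤ B * ∫ s in a..t, y s := by rw [← heq]; exact hmono
      _ ≤ B * M := mul_le_mul_of_nonneg_left hyle hBnn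
  have hya : y a ≤ A₅ := part1 k
  have e1 : c₂ * (∫ s in a..t, (y s) ^ 2) ≤ c₂ * (B * M) :=
    mul_le_mul_of_nonneg_left hy2le hc₂.le
  have e2 : c₂ * (∫ s in a..t, f s) ≤ c₂ * F := mul_le_mul_of_nonneg_left hfle hc₂.le
  have : c₂ * (B * M) = c₂ * B * M := by ring
  linarith
end

section
/- Let c₁, c₂, T > 0 with e^{-c₁T/2} ≤ 1/2. Let y, z, w, h : ℝ → ℝ be functions on [0, ∞) with y differentiable, z, w, h continuous, 0 ≤ y(t) ≤ z(t), w(t) ≥ 0 and h(t) ≥ 0 for all t ≥ 0, and suppose that y'(t) + c₁·z(t) ≤ c₂·w(t)·y(t) + h(t) for all t ≥ 0. Let M, H ≥ 0 be such that ∫_{kT}^{(k+1)T} w(t) dt ≤ M and ∫_{kT}^{(k+1)T} h(t) dt ≤ H for every k ∈ ℕ, and assume c₂·M ≤ c₁·T/2. Define B = 2·e^{c₂M}·H + y(0). Then: (i) y(kT) ≤ B for every k ∈ ℕ; (ii) y(t) ≤ e^{c₂M}·(H + B) for every t ≥ 0; (iii) for every k ∈ ℕ and t ∈ [kT, (k+1)T],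 y(t) + c₁·∫_{kT}^{t} z(s) ds ≤ c₂·M·e^{c₂M}·(H + B) + H + B. -/
open Real MeasureTheory intervalIntegral Set

private lemma prim_hasDeriv {f : ℝ → ℝ} {a b t : ℝ}
    (hf : ContinuousOn f (Icc a b)) (ht : t ∈ Ioo a b) :
    HasDerivAt (fun u => ∫ s in a..u, f s) (f t) t := by
  have hcont : ContinuousOn f (Ioo a b) := hf.mono Ioo_subset_Icc_self
  refine intervalIntegral.integral_hasDerivAt_right ?_
    (hcont.stronglyMeasurableAtFilter isOpen_Ioo t ht)
    (hcont.continuousAt (isOpen_Ioo.mem_nhds ht))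
  exact (hf.mono (uIcc_subset_Icc (left_mem_Icc.2 (ht.1.le.trans ht.2.le))
    (Icc_subset_Icc_right ht.2.le (right_mem_Icc.2 ht.1.le)))).intervalIntegrable

private lemma le_left_of_deriv_nonpos {a b : ℝ} {g : ℝ → ℝ} (hab : a ≤ b)
    (hc : ContinuousOn g (Icc a b))
    (hd : ∀ t ∈ Ioo a b, ∃ g', HasDerivAt g g' t ∧ g' ≤ 0) :
    ∀ t ∈ Icc a b, g t ≤ g a := by
  have h := antitoneOn_of_deriv_nonpos (convex_Icc a b) hc
    (by
      rw [interior_Icc]; intro x hx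
      obtain ⟨g', hg', _⟩ := hd x hx
      exact hg'.differentiableAt.differentiableWithinAt)
    (by
      rw [interior_Icc]; intro x hx
      obtain ⟨g', hg', hle⟩ := hd x hx
      rw [hg'.deriv]; exact hle)
  exact fun t ht => h (left_mem_Icc.2 hab) ht ht.1

private lemma cont_primitive {f : ℝ → ℝ} {a b : ℝ} (hab : a ≤ b)
    (hf : ContinuousOn f (Icc a b)) :
    ContinuousOn (fun u => ∫ s in a..u, f s) (Icc a b) := by
  have := intervalIntegral.continuousOn_primitive_interval
    (f := f) (a := a) (b := b) (μ := volume)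
    (by rw [uIcc_of_le hab]; exact hf.integrableOn_Icc)
  rwa [uIcc_of_le hab] at this

private lemma prim_le {f : ℝ → ℝ} {a b t : ℝ} (hf : ContinuousOn f (Icc a b))
    (hf0 : ∀ u ∈ Icc a b, 0 ≤ f u) (ht : t ∈ Icc a b) {M : ℝ}
    (hM : (∫ s in a..b, f s) ≤ M) :
    (∫ s in a..t, f s) ≤ M := by
  have h1 : IntervalIntegrable f volume a t :=
    (hf.mono (uIcc_subset_Icc (left_mem_Icc.2 (ht.1.trans ht.2)) ht)).intervalIntegrable
  have h2 : IntervalIntegrable f volume t b :=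
    (hf.mono (uIcc_subset_Icc ht (right_mem_Icc.2 (ht.1.trans ht.2)))).intervalIntegrable
  have hadd := intervalIntegral.integral_add_adjacent_intervals h1 h2
  have h3 : 0 ≤ ∫ s in t..b, f s :=
    intervalIntegral.integral_nonneg ht.2 (fun u hu => hf0 u ⟨ht.1.trans hu.1, hu.2⟩)
  linarith

private lemma prim_nonneg {f : ℝ → ℝ} {a b t : ℝ}
    (hf0 : ∀ u ∈ Icc a b, 0 ≤ f u) (ht : t ∈ Icc a b) :
    (0:ℝ) ≤ ∫ s in a..t, f s :=
  intervalIntegral.integral_nonneg ht.1 (fun u hu => hf0 u ⟨hu.1, hu.2.trans ht.2⟩)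

private lemma step_bound
    (c₁ c₂ : ℝ) (hc₁ : 0 < c₁) (hc₂ : 0 < c₂)
    (y z w h : ℝ → ℝ)
    (hy : DifferentiableOn ℝ y (Set.Ici 0))
    (hz : ContinuousOn z (Set.Ici 0))
    (hw : ContinuousOn w (Set.Ici 0))
    (hh : ContinuousOn h (Set.Ici 0))
    (hyz : ∀ t : ℝ, 0 ≤ t → 0 ≤ y t ∧ y t ≤ z t)
    (hw0 : ∀ t : ℝ, 0 ≤ t → 0 ≤ w t)
    (hh0 : ∀ t : ℝ, 0 ≤ t → 0 ≤ h t)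
    (hineq : ∀ t : ℝ, 0 ≤ t →
      derivWithin y (Set.Ici 0) t + c₁ * z t ≤ c₂ * w t * y t + h t)
    (M H : ℝ)
    (a b : ℝ) (h0a : 0 ≤ a) (hab : a ≤ b)
    (hWb : (∫ s in a..b, w s) ≤ M) (hHb : (∫ s in a..b, h s) ≤ H)
    (lam : ℝ) (hlam0 : 0 ≤ lam) (hlamc : lam ≤ c₁) :
    ∀ t ∈ Icc a b, y t ≤ Real.exp (c₂ * M - lam * (t - a)) * y a + Real.exp (c₂ * M) * H := by
  have hIcc : Icc a b ⊆ Ici 0 := fun x hx => h0a.trans hx.1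
  have hwI : ContinuousOn w (Icc a b) := hw.mono hIcc
  have hhI : ContinuousOn h (Icc a b) := hh.mono hIcc
  have hyI : ContinuousOn y (Icc a b) := hy.continuousOn.mono hIcc
  have hw0I : ∀ u ∈ Icc a b, 0 ≤ w u := fun u hu => hw0 u (hIcc hu)
  have hh0I : ∀ u ∈ Icc a b, 0 ≤ h u := fun u hu => hh0 u (hIcc hu)
  set W : ℝ → ℝ := fun u => ∫ s in a..u, w s with hWdef
  set E : ℝ → ℝ := fun u => Real.exp (lam * (u - a) - c₂ * W u) with hEdef
  have hWcont : ContinuousOn W (Icc a b) := cont_primitive hab hwI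
  have hEcont : ContinuousOn E (Icc a b) :=
    Real.continuous_exp.comp_continuousOn
      (((continuous_const.mul (continuous_id.sub continuous_const)).continuousOn).sub
        (continuousOn_const.mul hWcont))
  have hEhcont : ContinuousOn (fun u => E u * h u) (Icc a b) := hEcont.mul hhI
  set P : ℝ → ℝ := fun u => ∫ s in a..u, E s * h s with hPdef
  have hPcont : ContinuousOn P (Icc a b) := cont_primitive hab hEhcont
  -- W bounds
  have hWnn : ∀ u ∈ Icc a b, 0 ≤ W u :=
    fun u hu => intervalIntegral.integral_nonneg hu.1 (fun v hv => hw0I v ⟨hv.1, hv.2.trans hu.2⟩)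
  have hWleM : ∀ u ∈ Icc a b, W u ≤ M := fun u hu => prim_le hwI hw0I hu hWb
  -- the decreasing auxiliary function
  set g : ℝ → ℝ := fun u => E u * y u - P u with hgdef
  have hgle : ∀ t ∈ Icc a b, g t ≤ g a := by
    apply le_left_of_deriv_nonpos hab ((hEcont.mul hyI).sub hPcont)
    intro t ht
    have ht0 : (0:ℝ) < t := lt_of_le_of_lt h0a ht.1
    have hWd : HasDerivAt W (w t) t := prim_hasDeriv hwI ht
    have hEd : HasDerivAt E (Real.exp (lam * (t - a) - c₂ * W t) * (lam - c₂ * w t)) t := by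
      have h1 : HasDerivAt (fun u => lam * (u - a) - c₂ * W u) (lam - c₂ * w t) t := by
        have h2 := ((hasDerivAt_id t).sub_const a).const_mul lam
        simpa [mul_comm, Pi.sub_def] using h2.sub (hWd.const_mul c₂)
      exact h1.exp
    have hPd : HasDerivAt P (E t * h t) t := prim_hasDeriv hEhcont ht
    have hyt : DifferentiableAt ℝ y t := (hy t ht0.le).differentiableAt (Ici_mem_nhds ht0)
    have hyd : HasDerivAt y (deriv y t) t := hyt.hasDerivAt
    refine ⟨_, (hEd.mul hyd).sub hPd, ?_⟩
    have hdw : derivWithin y (Set.Ici 0) t = deriv y t := derivWithin_of_mem_nhds (Ici_mem_nhds ht0)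
    have hin := hineq t ht0.le
    rw [hdw] at hin
    have hzy := hyz t ht0.le
    have hEt : (0:ℝ) < E t := Real.exp_pos _
    have hX : (lam - c₂ * w t) * y t + deriv y t - h t ≤ 0 := by nlinarith [hzy.1, hzy.2]
    have : Real.exp (lam * (t - a) - c₂ * W t) * (lam - c₂ * w t) * y t
        + E t * deriv y t - E t * h t = E t * ((lam - c₂ * w t) * y t + deriv y t - h t) := by
      rw [hEdef]; ring
    rw [this]
    exact mul_nonpos_of_nonneg_of_nonpos hEt.le hX
  intro t ht
  have hga : g a = y a := by
    have hWa : W a = 0 := intervalIntegral.integral_same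
    have hPa : P a = 0 := intervalIntegral.integral_same
    simp [hgdef, hEdef, hWa, hPa]
  have hkey : E t * y t ≤ y a + P t := by
    have := hgle t ht
    rw [hga] at this
    simp only [hgdef] at this
    linarith
  -- bound P t
  have hPt : P t ≤ Real.exp (lam * (t - a)) * H := by
    have hIccsub : Icc a t ⊆ Icc a b := Icc_subset_Icc le_rfl ht.2
    have hint1 : IntervalIntegrable (fun s => E s * h s) volume a t :=
      ((hEhcont.mono hIccsub).mono (by rw [uIcc_of_le ht.1])).intervalIntegrable
    have hint2 : IntervalIntegrable (fun s => Real.exp (lam * (t - a)) * h s) volume a t :=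
      (((hhI.mono hIccsub).mono (by rw [uIcc_of_le ht.1])).intervalIntegrable).const_mul _
    have hmono : P t ≤ ∫ s in a..t, Real.exp (lam * (t - a)) * h s := by
      apply intervalIntegral.integral_mono_on ht.1 hint1 hint2
      intro s hs
      have hsb : s ∈ Icc a b := hIccsub hs
      have hE : E s ≤ Real.exp (lam * (t - a)) := by
        rw [hEdef]
        apply Real.exp_le_exp.2
        have := hWnn s hsb
        nlinarith [hs.1, hs.2]
      exact mul_le_mul_of_nonneg_right hE (hh0I s hsb)
    have hH2 : (∫ s in a..t, h s) ≤ H := prim_le hhI hh0I ht hHb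
    rw [intervalIntegral.integral_const_mul] at hmono
    calc P t ≤ Real.exp (lam * (t - a)) * ∫ s in a..t, h s := hmono
      _ ≤ Real.exp (lam * (t - a)) * H :=
        mul_le_mul_of_nonneg_left hH2 (Real.exp_pos _).le
  -- conclude
  have hya : 0 ≤ y a := (hyz a h0a).1
  have hHnn : 0 ≤ H := le_trans (prim_nonneg hh0I (right_mem_Icc.2 hab)) hHb
  have hWt1 : 0 ≤ W t := hWnn t ht
  have hWt2 : W t ≤ M := hWleM t ht
  have e1 : E t * (Real.exp (c₂ * M - lam * (t - a)) * y a) =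
      Real.exp (c₂ * (M - W t)) * y a := by
    rw [hEdef, ← mul_assoc, ← Real.exp_add]; ring_nf
  have e2 : E t * (Real.exp (c₂ * M) * H) =
      Real.exp (c₂ * (M - W t) + lam * (t - a)) * H := by
    rw [hEdef, ← mul_assoc, ← Real.exp_add]; ring_nf
  have h1 : (1:ℝ) ≤ Real.exp (c₂ * (M - W t)) :=
    Real.one_le_exp (by nlinarith)
  have h2 : Real.exp (lam * (t - a)) ≤ Real.exp (c₂ * (M - W t) + lam * (t - a)) :=
    Real.exp_le_exp.2 (by nlinarith)
  have hfin : E t * y t ≤ E t * (Real.exp (c₂ * M - lam * (t - a)) * y a + Real.exp (c₂ * M) * H) := by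
    rw [mul_add, e1, e2]
    nlinarith [hkey, hPt, mul_le_mul_of_nonneg_right h2 hHnn, mul_le_mul_of_nonneg_right h1 hya]
  exact le_of_mul_le_mul_left hfin (Real.exp_pos _)

private lemma int_bound
    (c₁ c₂ : ℝ) (hc₁ : 0 < c₁) (hc₂ : 0 < c₂)
    (y z w h : ℝ → ℝ)
    (hy : DifferentiableOn ℝ y (Set.Ici 0))
    (hz : ContinuousOn z (Set.Ici 0))
    (hw : ContinuousOn w (Set.Ici 0))
    (hh : ContinuousOn h (Set.Ici 0))
    (hw0 : ∀ t : ℝ, 0 ≤ t → 0 ≤ w t)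
    (hh0 : ∀ t : ℝ, 0 ≤ t → 0 ≤ h t)
    (hineq : ∀ t : ℝ, 0 ≤ t →
      derivWithin y (Set.Ici 0) t + c₁ * z t ≤ c₂ * w t * y t + h t)
    (M H : ℝ)
    (a b : ℝ) (h0a : 0 ≤ a) (hab : a ≤ b)
    (hWb : (∫ s in a..b, w s) ≤ M) (hHb : (∫ s in a..b, h s) ≤ H)
    (C : ℝ) (hC : 0 ≤ C) (hyC : ∀ u ∈ Icc a b, y u ≤ C) :
    ∀ t ∈ Icc a b, y t + c₁ * (∫ s in a..t, z s) ≤ y a + c₂ * M * C + H := by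
  have hIcc : Icc a b ⊆ Ici 0 := fun x hx => h0a.trans hx.1
  have hwI : ContinuousOn w (Icc a b) := hw.mono hIcc
  have hhI : ContinuousOn h (Icc a b) := hh.mono hIcc
  have hzI : ContinuousOn z (Icc a b) := hz.mono hIcc
  have hyI : ContinuousOn y (Icc a b) := hy.continuousOn.mono hIcc
  have hw0I : ∀ u ∈ Icc a b, 0 ≤ w u := fun u hu => hw0 u (hIcc hu)
  have hh0I : ∀ u ∈ Icc a b, 0 ≤ h u := fun u hu => hh0 u (hIcc hu)
  have hFcont : ContinuousOn (fun s => c₂ * w s * y s + h s) (Icc a b) :=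
    ((continuousOn_const.mul hwI).mul hyI).add hhI
  set Z : ℝ → ℝ := fun u => ∫ s in a..u, z s with hZdef
  set Q : ℝ → ℝ := fun u => ∫ s in a..u, c₂ * w s * y s + h s with hQdef
  set g : ℝ → ℝ := fun u => y u + c₁ * Z u - Q u with hgdef
  have hgle : ∀ t ∈ Icc a b, g t ≤ g a := by
    apply le_left_of_deriv_nonpos hab
      ((hyI.add (continuousOn_const.mul (cont_primitive hab hzI))).sub
        (cont_primitive hab hFcont))
    intro t ht
    have ht0 : (0:ℝ) < t := lt_of_le_of_lt h0a ht.1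
    have hZd : HasDerivAt Z (z t) t := prim_hasDeriv hzI ht
    have hQd : HasDerivAt Q (c₂ * w t * y t + h t) t := prim_hasDeriv hFcont ht
    have hyt : DifferentiableAt ℝ y t := (hy t ht0.le).differentiableAt (Ici_mem_nhds ht0)
    refine ⟨_, (hyt.hasDerivAt.add (hZd.const_mul c₁)).sub hQd, ?_⟩
    have hdw : derivWithin y (Set.Ici 0) t = deriv y t := derivWithin_of_mem_nhds (Ici_mem_nhds ht0)
    have hin := hineq t ht0.le
    rw [hdw] at hin
    linarith
  intro t ht
  have hga : g a = y a := by simp [hgdef, hZdef, hQdef]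
  have h1 := hgle t ht
  rw [hga] at h1
  simp only [hgdef] at h1
  -- bound Q t
  have hIccsub : Icc a t ⊆ Icc a b := Icc_subset_Icc le_rfl ht.2
  have hQt : Q t ≤ c₂ * M * C + H := by
    have hint1 : IntervalIntegrable (fun s => c₂ * w s * y s + h s) volume a t :=
      ((hFcont.mono hIccsub).mono (by rw [uIcc_of_le ht.1])).intervalIntegrable
    have hint2 : IntervalIntegrable (fun s => c₂ * C * w s + h s) volume a t := by
      refine IntervalIntegrable.add ?_ ?_
      · exact (((hwI.mono hIccsub).mono (by rw [uIcc_of_le ht.1])).intervalIntegrable).const_mul _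
      · exact ((hhI.mono hIccsub).mono (by rw [uIcc_of_le ht.1])).intervalIntegrable
    have hmono : Q t ≤ ∫ s in a..t, (c₂ * C * w s + h s) := by
      apply intervalIntegral.integral_mono_on ht.1 hint1 hint2
      intro s hs
      have hsb : s ∈ Icc a b := hIccsub hs
      have hx := mul_le_mul_of_nonneg_left (hyC s hsb) (mul_nonneg hc₂.le (hw0I s hsb))
      nlinarith [hx]
    have heq : (∫ s in a..t, (c₂ * C * w s + h s))
        = c₂ * C * (∫ s in a..t, w s) + ∫ s in a..t, h s := by
      rw [intervalIntegral.integral_add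
        ((((hwI.mono hIccsub).mono (by rw [uIcc_of_le ht.1])).intervalIntegrable).const_mul _)
        (((hhI.mono hIccsub).mono (by rw [uIcc_of_le ht.1])).intervalIntegrable),
        intervalIntegral.integral_const_mul]
    have hWt : (∫ s in a..t, w s) ≤ M := prim_le hwI hw0I ht hWb
    have hHt : (∫ s in a..t, h s) ≤ H := prim_le hhI hh0I ht hHb
    have hcC : 0 ≤ c₂ * C := mul_nonneg hc₂.le hC
    calc Q t ≤ c₂ * C * (∫ s in a..t, w s) + ∫ s in a..t, h s := heq ▸ hmono
      _ ≤ c₂ * C * M + H := by nlinarith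
      _ = c₂ * M * C + H := by ring
  linarith

/-- Differential-inequality skeleton shared by Lemmas 3.4 and 4.1. -/
theorem lemma34_41_core
    (c₁ c₂ T : ℝ) (hc₁ : 0 < c₁) (hc₂ : 0 < c₂) (hT : 0 < T)
    (hT2 : Real.exp (-c₁ * T / 2) ≤ 1 / 2)
    (y z w h : ℝ → ℝ)
    (hy : DifferentiableOn ℝ y (Set.Ici 0))
    (hz : ContinuousOn z (Set.Ici 0))
    (hw : ContinuousOn w (Set.Ici 0))
    (hh : ContinuousOn h (Set.Ici 0))
    (hyz : ∀ t : ℝ, 0 ≤ t → 0 ≤ y t ∧ y t ≤ z t)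
    (hw0 : ∀ t : ℝ, 0 ≤ t → 0 ≤ w t)
    (hh0 : ∀ t : ℝ, 0 ≤ t → 0 ≤ h t)
    (hineq : ∀ t : ℝ, 0 ≤ t →
      derivWithin y (Set.Ici 0) t + c₁ * z t ≤ c₂ * w t * y t + h t)
    (M H : ℝ) (hM : 0 ≤ M) (hH : 0 ≤ H)
    (hintw : ∀ k : ℕ, (∫ t in (k * T)..((k + 1 : ℕ) * T), w t) ≤ M)
    (hinth : ∀ k : ℕ, (∫ t in (k * T)..((k + 1 : ℕ) * T), h t) ≤ H)
    (hlarge : c₂ * M ≤ c₁ * T / 2)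
    (B : ℝ) (hB : B = 2 * Real.exp (c₂ * M) * H + y 0) :
    (∀ k : ℕ, y (k * T) ≤ B) ∧
    (∀ t : ℝ, 0 ≤ t → y t ≤ Real.exp (c₂ * M) * (H + B)) ∧
    (∀ k : ℕ, ∀ t ∈ Set.Icc ((k : ℝ) * T) (((k : ℝ) + 1) * T),
      y t + c₁ * (∫ s in ((k : ℝ) * T)..t, z s)
        ≤ c₂ * M * Real.exp (c₂ * M) * (H + B) + H + B) := by
  have hintw' : ∀ k : ℕ, (∫ t in ((k : ℝ) * T)..(((k : ℝ) + 1) * T), w t) ≤ M := by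
    intro k; have := hintw k; push_cast at this; exact this
  have hinth' : ∀ k : ℕ, (∫ t in ((k : ℝ) * T)..(((k : ℝ) + 1) * T), h t) ≤ H := by
    intro k; have := hinth k; push_cast at this; exact this
  have hka : ∀ k : ℕ, (0:ℝ) ≤ (k : ℝ) * T := fun k => mul_nonneg (Nat.cast_nonneg k) hT.le
  have hkab : ∀ k : ℕ, (k : ℝ) * T ≤ ((k : ℝ) + 1) * T := fun k => by nlinarith
  -- generic interval bound from step_bound
  have hstep : ∀ k : ℕ, ∀ lam : ℝ, 0 ≤ lam → lam ≤ c₁ →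
      ∀ t ∈ Icc ((k : ℝ) * T) (((k : ℝ) + 1) * T),
      y t ≤ Real.exp (c₂ * M - lam * (t - (k : ℝ) * T)) * y ((k : ℝ) * T)
        + Real.exp (c₂ * M) * H := by
    intro k lam h1 h2
    exact step_bound c₁ c₂ hc₁ hc₂ y z w h hy hz hw hh hyz hw0 hh0 hineq M H
      _ _ (hka k) (hkab k) (hintw' k) (hinth' k) lam h1 h2
  have hexp_pos := Real.exp_pos (c₂ * M)
  -- part (i)
  have part1 : ∀ k : ℕ, y ((k : ℝ) * T) ≤ B := by
    intro k
    induction k with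
    | zero =>
      simp only [Nat.cast_zero, zero_mul]
      nlinarith [(hyz 0 le_rfl).1]
    | succ k ih =>
      have hb := hstep k c₁ hc₁.le le_rfl (((k : ℝ) + 1) * T)
        (right_mem_Icc.2 (hkab k))
      have harg : c₂ * M - c₁ * (((k : ℝ) + 1) * T - (k : ℝ) * T) = c₂ * M - c₁ * T := by ring
      rw [harg] at hb
      have hhalf : Real.exp (c₂ * M - c₁ * T) ≤ 1 / 2 := by
        refine le_trans (Real.exp_le_exp.2 ?_) hT2
        linarith
      have hyk : 0 ≤ y ((k : ℝ) * T) := (hyz _ (hka k)).1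
      have h3 : Real.exp (c₂ * M - c₁ * T) * y ((k : ℝ) * T) ≤ 1 / 2 * y ((k : ℝ) * T) :=
        mul_le_mul_of_nonneg_right hhalf hyk
      have hy0 : 0 ≤ y 0 := (hyz 0 le_rfl).1
      have hcast : ((k + 1 : ℕ) : ℝ) = (k : ℝ) + 1 := by push_cast; ring
      rw [hcast]
      linarith
  refine ⟨fun k => part1 k, ?_, ?_⟩
  · -- part (ii)
    have part2 : ∀ t : ℝ, 0 ≤ t → y t ≤ Real.exp (c₂ * M) * (H + B) := by
      intro t ht
      set k := ⌊t / T⌋₊ with hk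
      have hkt : (k : ℝ) * T ≤ t := by
        have := Nat.floor_le (div_nonneg ht hT.le)
        calc (k : ℝ) * T ≤ (t / T) * T := by nlinarith
          _ = t := by field_simp
      have htk : t ≤ ((k : ℝ) + 1) * T := by
        have := Nat.lt_floor_add_one (t / T)
        have h2 : t / T * T < ((k : ℝ) + 1) * T := by nlinarith
        have h3 : t / T * T = t := by field_simp
        linarith
      have hb := hstep k 0 le_rfl hc₁.le t ⟨hkt, htk⟩
      simp only [zero_mul, sub_zero] at hb
      have hkB := part1 k
      nlinarith [(hyz _ (hka k)).1]
    exact part2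
  · -- part (iii)
    intro k t ht
    have hBnn : 0 ≤ B := by nlinarith [(hyz 0 le_rfl).1]
    have hC : 0 ≤ Real.exp (c₂ * M) * (H + B) := by positivity
    have part2 : ∀ u : ℝ, 0 ≤ u → y u ≤ Real.exp (c₂ * M) * (H + B) := by
      intro u hu
      set j := ⌊u / T⌋₊ with hj
      have hju : (j : ℝ) * T ≤ u := by
        have := Nat.floor_le (div_nonneg hu hT.le)
        calc (j : ℝ) * T ≤ (u / T) * T := by nlinarith
          _ = u := by field_simp
      have huj : u ≤ ((j : ℝ) + 1) * T := by
        have := Nat.lt_floor_add_one (u / T)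
        have h2 : u / T * T < ((j : ℝ) + 1) * T := by nlinarith
        have h3 : u / T * T = u := by field_simp
        linarith
      have hb := hstep j 0 le_rfl hc₁.le u ⟨hju, huj⟩
      simp only [zero_mul, sub_zero] at hb
      nlinarith [part1 j, (hyz _ (hka j)).1]
    have hib := int_bound c₁ c₂ hc₁ hc₂ y z w h hy hz hw hh hw0 hh0 hineq M H
      _ _ (hka k) (hkab k) (hintw' k) (hinth' k)
      (Real.exp (c₂ * M) * (H + B)) hC
      (fun u hu => part2 u ((hka k).trans hu.1)) t ht
    have := part1 k
    linarith
end

section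
/- Let c₁ > 0, c₃ ≥ 0 and γ > 0 satisfy c₃·γ² ≤ c₁/2. Let Y : ℝ → ℝ be differentiable and nonnegative on [0, ∞), let G : ℝ → ℝ be a function with G(t) ≤ c₁·γ/4 for all t ≥ 0, and suppose that Y'(t) ≤ −Y(t)·(c₁ − c₃·Y(t)²) + G(t) for all t ≥ 0 and that Y(0) ≤ γ. Then Y(t) ≤ γ for all t ≥ 0. -/
open Real Set

/-- Barrier (invariance) argument proving Lemma 4.2. -/
theorem barrier_invariance
    (c₁ c₃ γ : ℝ) (hc₁ : 0 < c₁) (hc₃ : 0 ≤ c₃) (hγ : 0 < γ)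
    (hsmall : c₃ * γ ^ 2 ≤ c₁ / 2)
    (Y G : ℝ → ℝ)
    (hY : DifferentiableOn ℝ Y (Set.Ici 0))
    (hY0 : ∀ t : ℝ, 0 ≤ t → 0 ≤ Y t)
    (hG : ∀ t : ℝ, 0 ≤ t → G t ≤ c₁ * γ / 4)
    (hineq : ∀ t : ℝ, 0 ≤ t →
      derivWithin Y (Set.Ici 0) t ≤ -Y t * (c₁ - c₃ * (Y t) ^ 2) + G t)
    (hinit : Y 0 ≤ γ) :
    ∀ t : ℝ, 0 ≤ t → Y t ≤ γ := by
  intro t ht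
  have key : ∀ ⦃x : ℝ⦄, x ∈ Icc (0:ℝ) t → Y x ≤ γ := by
    apply image_le_of_deriv_right_lt_deriv_boundary
      (f' := fun x => derivWithin Y (Set.Ici 0) x) (B := fun _ => γ) (B' := fun _ => 0)
    · exact (hY.continuousOn).mono (fun x hx => hx.1)
    · intro x hx
      exact ((hY x hx.1).hasDerivWithinAt).mono (Ici_subset_Ici.2 hx.1)
    · exact hinit
    · intro x; exact hasDerivAt_const x γ
    · intro x hx hYx
      have h1 := hineq x hx.1
      have h2 := hG x hx.1
      have : -Y x * (c₁ - c₃ * (Y x) ^ 2) + G x < 0 := by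
        rw [hYx]
        nlinarith
      linarith
  exact key ⟨ht, le_rfl⟩
end
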